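/- Let R, K_ℓ, K_R be smooth with R > 0 on an interval [a,b], and set H = 2R'/R, θ⁻ = 2K_R − H, trK = K_ℓ + 2K_R. Suppose θ⁻(ℓ) < 0 for all ℓ ∈ [a,b]. If k is a C¹ solution of ∂_ℓ k = −K_ℓ k² − H k + trK on [a,b] with k(a) < 1, then k(ℓ) < 1 for all ℓ ∈ [a,b]. -/

import Mathlib

open Filter Asymptotics Set Topology

/-- Mean curvature `H = 2 R' / R` of the spherically symmetric spheres. -/
noncomputable def Hf (R : ℝ → ℝ) : ℝ → ℝ := fun ℓ => 2 * deriv R ℓ / R ℓ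

/-- `trK = K_ℓ + 2 K_R`. -/
def trKf (Kl KR : ℝ → ℝ) : ℝ → ℝ := fun ℓ => Kl ℓ + 2 * KR ℓ

/-- Outer expansion `θ⁺ = 2 K_R + H`. -/
noncomputable def thetaPlus (R KR : ℝ → ℝ) : ℝ → ℝ := fun ℓ => 2 * KR ℓ + Hf R ℓ

/-- Inner expansion `θ⁻ = 2 K_R − H`. -/
noncomputable def thetaMinus (R KR : ℝ → ℝ) : ℝ → ℝ := fun ℓ => 2 * KR ℓ - Hf R ℓ

/-- If `θ⁻ < 0` on `[a,b]`, then a `C¹` solution of the reduced Jang equation on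
`[a,b]` with `k(a) < 1` satisfies `k < 1` on all of `[a,b]`. -/
theorem jang_upper_barrier_theta_minus_neg (a b : ℝ) (hab : a ≤ b) (R Kl KR k : ℝ → ℝ)
    (hR : ContDiffOn ℝ (⊤ : ℕ∞) R (Set.Icc a b))
    (hKl : ContDiffOn ℝ (⊤ : ℕ∞) Kl (Set.Icc a b))
    (hKR : ContDiffOn ℝ (⊤ : ℕ∞) KR (Set.Icc a b))
    (hRpos : ∀ ℓ ∈ Set.Icc a b, 0 < R ℓ)
    (hθ : ∀ ℓ ∈ Set.Icc a b, thetaMinus R KR ℓ < 0)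
    (hode : ∀ ℓ ∈ Set.Icc a b,
      HasDerivAt k (-(Kl ℓ) * k ℓ ^ 2 - Hf R ℓ * k ℓ + trKf Kl KR ℓ) ℓ)
    (hka : k a < 1) :
    ∀ ℓ ∈ Set.Icc a b, k ℓ < 1 := by
  by_contra hcon
  push_neg at hcon
  obtain ⟨ℓ0, hℓ0, hk0⟩ := hcon
  set S : Set ℝ := {x | x ∈ Set.Icc a b ∧ 1 ≤ k x} with hSdef
  have hne : S.Nonempty := ⟨ℓ0, hℓ0, hk0⟩
  have hbdd : BddBelow S := ⟨a, fun x hx => hx.1.1⟩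
  have hcont : ∀ x ∈ Set.Icc a b, ContinuousAt k x := fun x hx => (hode x hx).continuousAt
  have hclosed : IsClosed S := by
    have hEq : S = Set.Icc a b ∩ k ⁻¹' Set.Ici 1 := rfl
    rw [hEq]
    exact ContinuousOn.preimage_isClosed_of_isClosed
      (fun x hx => (hcont x hx).continuousWithinAt) isClosed_Icc isClosed_Ici
  set t := sInf S with ht
  have htS : t ∈ S := hclosed.csInf_mem hne hbdd
  have htI : t ∈ Set.Icc a b := htS.1
  have hat : a < t := htI.1.lt_of_ne (fun h => absurd htS.2 (not_le.mpr (h ▸ hka)))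
  have hIoo : Set.Ioo a t ∈ 𝓝[<] t := Ioo_mem_nhdsLT hat
  have hlt : ∀ y ∈ Set.Ioo a t, k y < 1 := by
    intro y hy
    by_contra hy1
    exact absurd (csInf_le hbdd ⟨⟨hy.1.le, hy.2.le.trans htI.2⟩, not_lt.mp hy1⟩)
      (not_le.mpr hy.2)
  have hktle : k t ≤ 1 := by
    have htend : Filter.Tendsto k (𝓝[<] t) (𝓝 (k t)) :=
      ((hcont t htI).tendsto).mono_left nhdsWithin_le_nhds
    refine le_of_tendsto htend ?_
    filter_upwards [hIoo] with y hy using (hlt y hy).le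
  have hkt : k t = 1 := le_antisymm hktle htS.2
  have hd := hode t htI
  have hdval : -(Kl t) * k t ^ 2 - Hf R t * k t + trKf Kl KR t = thetaMinus R KR t := by
    rw [hkt]; simp only [trKf, thetaMinus]; ring
  rw [hdval] at hd
  have hneg : thetaMinus R KR t < 0 := hθ t htI
  have hslope : Filter.Tendsto (slope k t) (𝓝[≠] t) (𝓝 (thetaMinus R KR t)) :=
    hasDerivAt_iff_tendsto_slope.mp hd
  have hsl : ∀ᶠ y in 𝓝[≠] t, slope k t y < 0 :=
    hslope.eventually (eventually_lt_nhds hneg)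
  have hmono : 𝓝[<] t ≤ 𝓝[≠] t :=
    nhdsWithin_mono t (fun y hy => ne_of_lt hy)
  have hIoo' : ∀ᶠ y in 𝓝[<] t, y ∈ Set.Ioo a t := hIoo
  have hcomb : ∀ᶠ y in 𝓝[<] t, slope k t y < 0 ∧ y ∈ Set.Ioo a t :=
    (hsl.filter_mono hmono).and hIoo' 
  obtain ⟨y, hy1, hy2⟩ := hcomb.exists
  have hky : k y < 1 := hlt y hy2
  rw [slope_def_field] at hy1
  have hnum : k y - k t < 0 := by rw [hkt]; linarith
  have hden : y - t < 0 := by linarith [hy2.2]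
  have : 0 < (k y - k t) / (y - t) := div_pos_of_neg_of_neg hnum hden
  linarith [this]
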